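/- Let ψ_1, …, ψ_N be linearly independent unit vectors in ℂ^d. Let H be the d×N matrix with columns ψ_1, …, ψ_N, let G := H*H, let W := HH* = Σ_{i=1}^N ψ_i ψ_i*, let M := H G⁻² H*, and let P := λ_max(M)⁻¹ · M, where λ_max(M) is the largest eigenvalue of the Hermitian matrix M. Then for every i ∈ {1,…,N}, Re⟨ψ_i, P ψ_i⟩ > 0 and 1 / Re⟨ψ_i, P ψ_i⟩ ≤ λ_max(W) / λ_min⁺(W). -/

import Mathlib

open Matrix
open scoped ComplexOrder

namespace Stmt6Aux

variable {d : ℕ}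

lemma selfdot (x : Fin d → ℂ) :
    star x ⬝ᵥ x = ((∑ j, Complex.normSq (x j) : ℝ) : ℂ) := by
  push_cast
  simp only [dotProduct, Pi.star_apply, Complex.normSq_eq_conj_mul_self, RCLike.star_def]

lemma sandwich {N : ℕ} (H : Matrix (Fin d) (Fin N) ℂ) (A : Matrix (Fin d) (Fin d) ℂ)
    (x y : Fin N → ℂ) :
    star (H *ᵥ x) ⬝ᵥ (A *ᵥ (H *ᵥ y)) = star x ⬝ᵥ ((Hᴴ * A * H) *ᵥ y) := by
  rw [star_mulVec, mulVec_mulVec, ← dotProduct_mulVec, mulVec_mulVec, ← Matrix.mul_assoc]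

lemma normpres {T : Matrix (Fin d) (Fin d) ℂ} (hT : T.IsHermitian) (x : Fin d → ℂ) :
    star x ⬝ᵥ x =
      ((∑ j, Complex.normSq
        ((star (hT.eigenvectorUnitary : Matrix (Fin d) (Fin d) ℂ) *ᵥ x) j) : ℝ) : ℂ) := by
  rw [← selfdot, star_mulVec, ← dotProduct_mulVec, mulVec_mulVec,
    ← Matrix.star_eq_conjTranspose, star_star,
    Matrix.mem_unitaryGroup_iff.mp hT.eigenvectorUnitary.2, one_mulVec]

lemma quad {T : Matrix (Fin d) (Fin d) ℂ} (hT : T.IsHermitian) (x : Fin d → ℂ) :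
    star x ⬝ᵥ (T *ᵥ x) =
      ((∑ j, hT.eigenvalues j * Complex.normSq
        ((star (hT.eigenvectorUnitary : Matrix (Fin d) (Fin d) ℂ) *ᵥ x) j) : ℝ) : ℂ) := by
  set U : Matrix (Fin d) (Fin d) ℂ := (hT.eigenvectorUnitary : Matrix (Fin d) (Fin d) ℂ)
    with hU
  set c := star U *ᵥ x with hc
  have h1 : star c ⬝ᵥ ((Matrix.diagonal (RCLike.ofReal ∘ hT.eigenvalues)) *ᵥ c)
      = star x ⬝ᵥ (T *ᵥ x) := by
    rw [hc, star_mulVec, mulVec_mulVec, ← dotProduct_mulVec, mulVec_mulVec,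
      ← Matrix.star_eq_conjTranspose, star_star, ← Matrix.mul_assoc]
    conv_rhs => rw [hT.spectral_theorem, Unitary.conjStarAlgAut_apply]
  rw [← h1]
  push_cast
  simp only [dotProduct, Pi.star_apply]
  refine Finset.sum_congr rfl fun j _ => ?_
  rw [mulVec_diagonal]
  simp only [Function.comp_apply, RCLike.star_def, Complex.normSq_eq_conj_mul_self]
  show (starRingEnd ℂ) (c j) * ((hT.eigenvalues j : ℂ) * c j)
      = (hT.eigenvalues j : ℂ) * ((starRingEnd ℂ) (c j) * c j)
  ring

lemma ray (hd : Nonempty (Fin d)) {T : Matrix (Fin d) (Fin d) ℂ} (hT : T.IsHermitian)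
    {x : Fin d → ℂ} (hx : star x ⬝ᵥ x = 1) :
    (star x ⬝ᵥ (T *ᵥ x)).re ≤ ⨆ j, hT.eigenvalues j := by
  set c := star (hT.eigenvectorUnitary : Matrix (Fin d) (Fin d) ℂ) *ᵥ x with hc
  have hn := normpres hT x
  rw [hx] at hn
  have hsum : ∑ j, Complex.normSq (c j) = 1 := by exact_mod_cast hn.symm
  rw [quad hT x, Complex.ofReal_re]
  have hbdd : ∀ j, hT.eigenvalues j ≤ ⨆ k, hT.eigenvalues k := fun j =>
    le_ciSup (Set.finite_range _).bddAbove j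
  calc ∑ j, hT.eigenvalues j * Complex.normSq (c j)
      ≤ ∑ j, (⨆ k, hT.eigenvalues k) * Complex.normSq (c j) :=
        Finset.sum_le_sum fun j _ =>
          mul_le_mul_of_nonneg_right (hbdd j) (Complex.normSq_nonneg _)
    _ = ⨆ k, hT.eigenvalues k := by rw [← Finset.mul_sum, hsum, mul_one]

lemma minbound {T : Matrix (Fin d) (Fin d) ℂ} (hT : T.IsHermitian)
    (hpsd : T.PosSemidef) {x : Fin d → ℂ} (y : Fin d → ℂ) (hxy : x = T *ᵥ y)
    (hx : star x ⬝ᵥ x = 1) :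
    sInf {r : ℝ | 0 < r ∧ ∃ j, hT.eigenvalues j = r} ≤ (star x ⬝ᵥ (T *ᵥ x)).re := by
  set U : Matrix (Fin d) (Fin d) ℂ := (hT.eigenvectorUnitary : Matrix (Fin d) (Fin d) ℂ)
    with hU
  set c := star U *ᵥ x with hc
  have hDU : star U * T = Matrix.diagonal (RCLike.ofReal ∘ hT.eigenvalues) * star U := by
    conv_lhs => rw [hT.spectral_theorem, Unitary.conjStarAlgAut_apply]
    rw [← Matrix.mul_assoc, ← Matrix.mul_assoc,
      Matrix.mem_unitaryGroup_iff'.mp hT.eigenvectorUnitary.2, Matrix.one_mul]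
  have hczero : ∀ j, hT.eigenvalues j = 0 → c j = 0 := by
    intro j hj
    have hcy : c = Matrix.diagonal (RCLike.ofReal ∘ hT.eigenvalues) *ᵥ (star U *ᵥ y) := by
      rw [hc, hxy, mulVec_mulVec, hDU, ← mulVec_mulVec]
    rw [hcy, mulVec_diagonal]
    simp [hj]
  have hn := normpres hT x
  rw [hx] at hn
  have hsum : ∑ j, Complex.normSq (c j) = 1 := by exact_mod_cast hn.symm
  rw [quad hT x, Complex.ofReal_re]
  set m := sInf {r : ℝ | 0 < r ∧ ∃ j, hT.eigenvalues j = r} with hm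
  have hbdd : BddBelow {r : ℝ | 0 < r ∧ ∃ j, hT.eigenvalues j = r} :=
    ⟨0, fun r hr => hr.1.le⟩
  have key : ∀ j, m * Complex.normSq (c j) ≤ hT.eigenvalues j * Complex.normSq (c j) := by
    intro j
    rcases eq_or_ne (hT.eigenvalues j) 0 with h0 | h0
    · rw [hczero j h0, Complex.normSq_zero, mul_zero, mul_zero]
    · have hpos : 0 < hT.eigenvalues j := (hpsd.eigenvalues_nonneg j).lt_of_ne (Ne.symm h0)
      exact mul_le_mul_of_nonneg_right (csInf_le hbdd ⟨hpos, j, rfl⟩)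
        (Complex.normSq_nonneg _)
  calc m = m * ∑ j, Complex.normSq (c j) := by rw [hsum, mul_one]
    _ = ∑ j, m * Complex.normSq (c j) := by rw [Finset.mul_sum]
    _ ≤ ∑ j, hT.eigenvalues j * Complex.normSq (c j) := Finset.sum_le_sum fun j _ => key j

end Stmt6Aux

open Stmt6Aux

theorem stmt_6 {d N : ℕ} (ψ : Fin N → (Fin d → ℂ))
    (hunit : ∀ i, star (ψ i) ⬝ᵥ ψ i = 1) (hli : LinearIndependent ℂ ψ)
    (H : Matrix (Fin d) (Fin N) ℂ) (hH : ∀ a i, H a i = ψ i a)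
    (G : Matrix (Fin N) (Fin N) ℂ) (hG : G = Hᴴ * H)
    (W : Matrix (Fin d) (Fin d) ℂ) (hW : W = H * Hᴴ) (hWh : W.IsHermitian)
    (M : Matrix (Fin d) (Fin d) ℂ) (hM : M = H * (G⁻¹ * G⁻¹) * Hᴴ) (hMh : M.IsHermitian)
    (P : Matrix (Fin d) (Fin d) ℂ) (hP : P = (⨆ i, hMh.eigenvalues i)⁻¹ • M) :
    ∀ i, 0 < (star (ψ i) ⬝ᵥ (P *ᵥ ψ i)).re ∧
      1 / (star (ψ i) ⬝ᵥ (P *ᵥ ψ i)).re ≤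
        (⨆ j, hWh.eigenvalues j) /
          sInf {x : ℝ | 0 < x ∧ ∃ j, hWh.eigenvalues j = x} := by
  intro i
  -- d is positive
  have hd : Nonempty (Fin d) := by
    by_contra h
    rw [not_nonempty_iff] at h
    have h1 := hunit i
    rw [dotProduct, Finset.univ_eq_empty, Finset.sum_empty] at h1
    exact one_ne_zero h1.symm
  haveI := hd
  -- G is invertible
  have hGdet : IsUnit G.det := by
    rw [← Matrix.isUnit_iff_isUnit_det, ← Matrix.mulVec_injective_iff_isUnit]
    have hker : ∀ z, G *ᵥ z = 0 → z = 0 := by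
      intro z hz
      have h1 : star (H *ᵥ z) ⬝ᵥ (H *ᵥ z) = 0 := by
        rw [star_mulVec, ← dotProduct_mulVec, mulVec_mulVec, ← hG, hz, dotProduct_zero]
      have h2 : H *ᵥ z = 0 := dotProduct_star_self_eq_zero.mp h1
      have h3 : ∑ k, z k • ψ k = 0 := by
        funext a
        have h4 := congr_fun h2 a
        simp only [mulVec, dotProduct, hH, Pi.zero_apply] at h4
        simp only [Finset.sum_apply, Pi.smul_apply, smul_eq_mul, Pi.zero_apply]
        rw [← h4]
        exact Finset.sum_congr rfl fun k _ => mul_comm _ _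
      funext k
      exact Fintype.linearIndependent_iff.mp hli z h3 k
    intro x y hxy
    have h5 := hker (x - y) (by rw [Matrix.mulVec_sub, hxy, sub_self])
    exact sub_eq_zero.mp h5
  have hGl : G⁻¹ * G = 1 := Matrix.nonsing_inv_mul G hGdet
  have hGr : G * G⁻¹ = 1 := Matrix.mul_nonsing_inv G hGdet
  -- columns of H are the ψ's
  have hψ : ∀ k, H *ᵥ Pi.single k 1 = ψ k := by
    intro k
    funext a
    simp [mulVec_single, hH]
  -- key algebraic identities
  have key1 : Hᴴ * M * H = 1 := by
    rw [hM]
    calc Hᴴ * (H * (G⁻¹ * G⁻¹) * Hᴴ) * H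
        = (Hᴴ * H) * ((G⁻¹ * G⁻¹) * (Hᴴ * H)) := by simp only [Matrix.mul_assoc]
      _ = G * ((G⁻¹ * G⁻¹) * G) := by rw [← hG]
      _ = (G * G⁻¹) * (G⁻¹ * G) := by simp only [Matrix.mul_assoc]
      _ = 1 := by rw [hGr, hGl, one_mul]
  have key2 : M * W * M = M := by
    rw [hM, hW]
    calc (H * (G⁻¹ * G⁻¹) * Hᴴ) * (H * Hᴴ) * (H * (G⁻¹ * G⁻¹) * Hᴴ)
        = H * ((G⁻¹ * G⁻¹) * ((Hᴴ * H) * ((Hᴴ * H) * ((G⁻¹ * G⁻¹) * Hᴴ)))) := by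
          simp only [Matrix.mul_assoc]
      _ = H * ((G⁻¹ * G⁻¹) * (G * (G * ((G⁻¹ * G⁻¹) * Hᴴ)))) := by rw [← hG]
      _ = H * (G⁻¹ * ((G⁻¹ * G) * ((G * G⁻¹) * (G⁻¹ * Hᴴ)))) := by
          simp only [Matrix.mul_assoc]
      _ = H * (G⁻¹ * (G⁻¹ * Hᴴ)) := by rw [hGl, hGr]; simp only [Matrix.one_mul]
      _ = H * (G⁻¹ * G⁻¹) * Hᴴ := by simp only [Matrix.mul_assoc]
  have key3 : W * (H * (G⁻¹ * (G⁻¹ * G⁻¹)) * Hᴴ) = M := by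
    rw [hW, hM]
    calc (H * Hᴴ) * (H * (G⁻¹ * (G⁻¹ * G⁻¹)) * Hᴴ)
        = H * ((Hᴴ * H) * (G⁻¹ * (G⁻¹ * (G⁻¹ * Hᴴ)))) := by simp only [Matrix.mul_assoc]
      _ = H * (G * (G⁻¹ * (G⁻¹ * (G⁻¹ * Hᴴ)))) := by rw [← hG]
      _ = H * ((G * G⁻¹) * (G⁻¹ * (G⁻¹ * Hᴴ))) := by simp only [Matrix.mul_assoc]
      _ = H * (G⁻¹ * (G⁻¹ * Hᴴ)) := by rw [hGr]; simp only [Matrix.one_mul]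
      _ = H * (G⁻¹ * G⁻¹) * Hᴴ := by simp only [Matrix.mul_assoc]
  -- the quadratic form of M at ψ i is 1
  have hMψ : star (ψ i) ⬝ᵥ (M *ᵥ ψ i) = 1 := by
    rw [← hψ i, sandwich, key1, one_mulVec]
    simp [dotProduct_single, Pi.single_apply]
  -- the quadratic form of W at ψ i is at least 1
  have hWψ : 1 ≤ (star (ψ i) ⬝ᵥ (W *ᵥ ψ i)).re := by
    have e1 : star (ψ i) ⬝ᵥ (W *ᵥ ψ i) = star (Hᴴ *ᵥ ψ i) ⬝ᵥ (Hᴴ *ᵥ ψ i) := by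
      rw [hW, ← mulVec_mulVec, dotProduct_mulVec, star_mulVec, conjTranspose_conjTranspose]
    have e2 : (Hᴴ *ᵥ ψ i) i = 1 := by
      have : (Hᴴ *ᵥ ψ i) i = star (ψ i) ⬝ᵥ ψ i := by
        simp [mulVec, dotProduct, conjTranspose_apply, hH]
      rw [this, hunit i]
    rw [e1, selfdot, Complex.ofReal_re]
    calc (1 : ℝ) = Complex.normSq ((Hᴴ *ᵥ ψ i) i) := by rw [e2]; simp
      _ ≤ ∑ j, Complex.normSq ((Hᴴ *ᵥ ψ i) j) :=
        Finset.single_le_sum (fun j _ => Complex.normSq_nonneg _) (Finset.mem_univ i)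
  -- abbreviations
  set μ := ⨆ j, hMh.eigenvalues j with hμ
  set A := ⨆ j, hWh.eigenvalues j with hA
  set m := sInf {x : ℝ | 0 < x ∧ ∃ j, hWh.eigenvalues j = x} with hm
  have hμ1 : (1 : ℝ) ≤ μ := by
    have h := ray hd hMh (hunit i)
    rwa [hMψ, Complex.one_re] at h
  have hμpos : (0 : ℝ) < μ := lt_of_lt_of_le one_pos hμ1
  have hA1 : (1 : ℝ) ≤ A := le_trans hWψ (ray hd hWh (hunit i))
  -- the value of the quadratic form of P at ψ i
  have hPψ : star (ψ i) ⬝ᵥ (P *ᵥ ψ i) = ((μ⁻¹ : ℝ) : ℂ) := by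
    rw [hP, smul_mulVec, dotProduct_smul, hMψ]
    simp [Complex.real_smul]
  -- the top eigenvector of M
  obtain ⟨jM, hjM⟩ := Finite.exists_max (fun j => hMh.eigenvalues j)
  have hμeq : μ = hMh.eigenvalues jM :=
    le_antisymm (ciSup_le hjM) (le_ciSup (Set.finite_range _).bddAbove jM)
  set v : Fin d → ℂ := ⇑(hMh.eigenvectorBasis jM) with hv
  have hMv : M *ᵥ v = hMh.eigenvalues jM • v := hMh.mulVec_eigenvectorBasis jM
  have hvunit : star v ⬝ᵥ v = 1 := by
    have h1 : v = (hMh.eigenvectorUnitary : Matrix (Fin d) (Fin d) ℂ) *ᵥ Pi.single jM 1 :=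
      (Matrix.IsHermitian.eigenvectorUnitary_mulVec hMh jM).symm
    rw [h1, star_mulVec, ← dotProduct_mulVec, mulVec_mulVec,
      ← Matrix.star_eq_conjTranspose,
      Matrix.mem_unitaryGroup_iff'.mp hMh.eigenvectorUnitary.2, one_mulVec]
    simp [dotProduct_single, Pi.single_apply]
  -- ⟨v, M v⟩ = μ
  have hsvM : star v ᵥ* M = hMh.eigenvalues jM • star v := by
    have h1 : star v ᵥ* M = star (Mᴴ *ᵥ v) := by
      rw [star_mulVec, conjTranspose_conjTranspose]
    rw [h1, hMh.eq, hMv, star_smul, star_trivial]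
  -- μ² ⟨v, W v⟩ = μ
  have hMWMv : star v ⬝ᵥ ((M * W * M) *ᵥ v)
      = hMh.eigenvalues jM • (hMh.eigenvalues jM • (star v ⬝ᵥ (W *ᵥ v))) := by
    rw [← mulVec_mulVec, ← mulVec_mulVec, hMv, Matrix.mulVec_smul,
      dotProduct_mulVec, hsvM, smul_dotProduct, dotProduct_smul]
  have hMvdot : star v ⬝ᵥ (M *ᵥ v) = ((hMh.eigenvalues jM : ℝ) : ℂ) := by
    rw [hMv, dotProduct_smul, hvunit]
    simp [Complex.real_smul]
  have hsq : μ * ((star v ⬝ᵥ (W *ᵥ v)).re * μ) = μ := by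
    have h1 : star v ⬝ᵥ ((M * W * M) *ᵥ v) = ((μ : ℝ) : ℂ) := by rw [key2, hMvdot, hμeq]
    rw [hMWMv, ← hμeq] at h1
    have h2 := congrArg Complex.re h1
    simp only [Complex.real_smul, Complex.mul_re, Complex.ofReal_re, Complex.ofReal_im,
      zero_mul, sub_zero, zero_sub, mul_zero, neg_zero] at h2
    nlinarith [h2]
  set t := (star v ⬝ᵥ (W *ᵥ v)).re with htdef
  have hμt : μ * t = 1 := by
    have := mul_left_cancel₀ hμpos.ne' (by rw [mul_one]; nlinarith [hsq] : μ * (t * μ) = μ * 1)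
    nlinarith [this]
  -- v lies in the range of W
  have hvy : v = W *ᵥ ((hMh.eigenvalues jM)⁻¹ • ((H * (G⁻¹ * (G⁻¹ * G⁻¹)) * Hᴴ) *ᵥ v)) := by
    rw [Matrix.mulVec_smul, mulVec_mulVec, key3, hMv, smul_smul,
      inv_mul_cancel₀ (by rw [← hμeq]; exact hμpos.ne'), one_smul]
  have hWpsd : W.PosSemidef := by
    rw [hW]
    exact Matrix.posSemidef_self_mul_conjTranspose H
  have hmt : m ≤ t := minbound hWh hWpsd _ hvy hvunit
  -- the set of positive eigenvalues of W is finite and nonempty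
  have hSfin : {x : ℝ | 0 < x ∧ ∃ j, hWh.eigenvalues j = x}.Finite :=
    (Set.finite_range hWh.eigenvalues).subset fun r hr => hr.2
  have hSne : {x : ℝ | 0 < x ∧ ∃ j, hWh.eigenvalues j = x}.Nonempty := by
    obtain ⟨jW, hjW⟩ := Finite.exists_max (fun j => hWh.eigenvalues j)
    have hAeq : A = hWh.eigenvalues jW :=
      le_antisymm (ciSup_le hjW) (le_ciSup (Set.finite_range _).bddAbove jW)
    exact ⟨A, lt_of_lt_of_le one_pos hA1, jW, hAeq.symm⟩
  have hmS : m ∈ {x : ℝ | 0 < x ∧ ∃ j, hWh.eigenvalues j = x} := hSne.csInf_mem hSfin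
  have hmpos : (0 : ℝ) < m := hmS.1
  -- conclusion
  refine ⟨?_, ?_⟩
  · rw [hPψ, Complex.ofReal_re]
    exact inv_pos.mpr hμpos
  · rw [hPψ, Complex.ofReal_re, one_div, inv_inv, le_div_iff₀ hmpos]
    calc μ * m ≤ μ * t := mul_le_mul_of_nonneg_left hmt hμpos.le
      _ = 1 := hμt
      _ ≤ A := hA1
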